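/- Let G be a locally finite Borel graph on a Polish space X and let f : ℕ → ℕ be any function. Then there is a sequence ⟨Aₙ : n ∈ ℕ⟩ of Borel subsets of X such that A = ⋃ₙ Aₙ is comeager and G-invariant, and for each n any two distinct points x, y ∈ Aₙ satisfy d_G(x, y) > f(n). -/

import Mathlib

open Set Function MeasureTheory Topology PiNat Filter

namespace MarksUngerProof

variable {α : Type*}

variable {α : Type*}

/-- A countable family of sets can be enclosed in Borel sets with empty intersection. -/
def SepFam [MeasurableSpace α] (S : ℕ → Set α) : Prop :=
  ∃ B : ℕ → Set α, (∀ n, MeasurableSet (B n)) ∧ (∀ n, S n ⊆ B n) ∧ (⋂ n, B n) = ∅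

/-- Novikov-type countable separation theorem, for ranges of continuous maps from `ℕ → ℕ`. -/
theorem sepFam_ranges [TopologicalSpace α] [T2Space α] [MeasurableSpace α]
    [OpensMeasurableSpace α] (f : ℕ → (ℕ → ℕ) → α) (hf : ∀ n, Continuous (f n))
    (hdisj : (⋂ n, range (f n)) = ∅) : SepFam (fun n => range (f n)) := by
  by_contra hsep
  have I : ∀ (s : ℕ → (ℕ → ℕ) × ℕ) (k : ℕ),
      ¬ SepFam (fun n => f n '' cylinder (s n).1 (s n).2) →
      ∃ x, x ∈ cylinder (s k).1 (s k).2 ∧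
        ¬ SepFam (fun n => f n '' cylinder ((update s k (x, (s k).2 + 1)) n).1
            ((update s k (x, (s k).2 + 1)) n).2) := by
    intro s k
    contrapose!
    intro H
    have H' : ∀ i : ℕ, SepFam (fun n => f n '' cylinder
        ((update s k (update (s k).1 (s k).2 i, (s k).2 + 1)) n).1
        ((update s k (update (s k).1 (s k).2 i, (s k).2 + 1)) n).2) :=
      fun i => H _ (update_mem_cylinder _ _ _)
    choose B hBmeas hBsub hBempty using H'
    refine ⟨fun n => if n = k then ⋃ i, B i k else ⋂ i, B i n, fun n => ?_, fun n => ?_, ?_⟩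
    · dsimp only
      split_ifs
      exacts [.iUnion fun i => hBmeas i k, .iInter fun i => hBmeas i n]
    · dsimp only
      split_ifs with h
      · subst h
        rw [← iUnion_cylinder_update (s n).1 (s n).2, image_iUnion]
        refine iUnion_subset fun i => subset_iUnion_of_subset i ?_
        have := hBsub i n
        simpa using this
      · refine subset_iInter fun i => ?_
        have := hBsub i n
        simpa [update_of_ne h] using this
    · ext x
      simp only [mem_iInter, mem_empty_iff_false, iff_false]
      intro hx
      have hk := hx k
      rw [if_pos rfl] at hk
      obtain ⟨i, hi⟩ := mem_iUnion.1 hk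
      have hmem : x ∈ ⋂ n, B i n := by
        refine mem_iInter.2 fun n => ?_
        rcases eq_or_ne n k with rfl | h
        · exact hi
        · have := hx n
          rw [if_neg h] at this
          exact mem_iInter.1 this i
      rw [hBempty i] at hmem
      exact hmem
  -- iterate
  have hcyl0 : ∀ y : ℕ → ℕ, cylinder y 0 = univ := fun y => by
    ext z; simp [PiNat.cylinder]
  have hinit : ¬ SepFam fun n => f n '' cylinder ((fun _ : ℕ => ((fun _ => 0 : ℕ → ℕ), 0)) n).1
      ((fun _ : ℕ => ((fun _ => 0 : ℕ → ℕ), 0)) n).2 := by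
    simpa [hcyl0, image_univ] using hsep
  let Γ := {s : ℕ → (ℕ → ℕ) × ℕ // ¬ SepFam fun n => f n '' cylinder (s n).1 (s n).2}
  have step : ∀ (p : Γ) (k : ℕ), ∃ q : Γ,
      (∀ n, n ≠ k → q.1 n = p.1 n) ∧ ((q.1 k).2 = (p.1 k).2 + 1) ∧
      (q.1 k).1 ∈ cylinder (p.1 k).1 (p.1 k).2 := by
    rintro ⟨s, hs⟩ k
    obtain ⟨x, hx, hns⟩ := I s k hs
    exact ⟨⟨update s k (x, (s k).2 + 1), hns⟩, fun n hn => update_of_ne hn _ _,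
      by simp, by simpa using hx⟩
  choose Fs hF1 hF2 hF3 using step
  let p0 : Γ := ⟨fun _ => ((fun _ => 0 : ℕ → ℕ), 0), hinit⟩
  let seq : ℕ → Γ := fun t => Nat.rec p0 (fun t' q => Fs q (Nat.unpair t').1) t
  have seq_succ : ∀ t, seq (t + 1) = Fs (seq t) (Nat.unpair t).1 := fun _ => rfl
  let len : ℕ → ℕ → ℕ := fun n t => ((seq t).1 n).2
  let pt : ℕ → ℕ → ℕ → ℕ := fun n t => ((seq t).1 n).1
  have len_succ : ∀ n t, len n (t + 1) =
      if (Nat.unpair t).1 = n then len n t + 1 else len n t := by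
    intro n t
    by_cases h : (Nat.unpair t).1 = n
    · subst h
      rw [if_pos rfl]
      show ((Fs (seq t) _).1 _).2 = _
      exact hF2 (seq t) _
    · rw [if_neg h]
      show ((Fs (seq t) _).1 n).2 = _
      rw [hF1 (seq t) _ n fun hn => h hn.symm]
  have len_mono : ∀ n, Monotone (len n) := by
    intro n
    apply monotone_nat_of_le_succ
    intro t
    rw [len_succ n t]
    split_ifs <;> omega
  have len_unbdd : ∀ n L, ∃ t, L ≤ len n t := by
    intro n L
    induction L with
    | zero => exact ⟨0, Nat.zero_le _⟩
    | succ L ih =>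
      obtain ⟨t, ht⟩ := ih
      refine ⟨Nat.pair n t + 1, ?_⟩
      rw [len_succ, Nat.unpair_pair, if_pos (show ((n, t).1 : ℕ) = n from rfl)]
      have := len_mono n (Nat.right_le_pair n t)
      omega
  have pt_frozen : ∀ n i t t', t ≤ t' → i < len n t → pt n t' i = pt n t i := by
    intro n i t t' htt' hi
    induction t', htt' using Nat.le_induction with
    | base => rfl
    | succ t' htt' ih =>
      by_cases h : (Nat.unpair t').1 = n
      · have hcyl : pt n (t' + 1) ∈ cylinder (pt n t') (len n t') := by
          show ((Fs (seq t') _).1 n).1 ∈ _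
          rw [h]
          exact hF3 (seq t') _
        have hival : pt n (t' + 1) i = pt n t' i :=
          hcyl i (lt_of_lt_of_le hi (len_mono n htt'))
        rw [hival, ih]
      · have heq : pt n (t' + 1) = pt n t' := by
          show ((Fs (seq t') _).1 n).1 = _
          rw [hF1 (seq t') _ n fun hn => h hn.symm]
        rw [heq, ih]
  choose T hT using fun n i => len_unbdd n (i + 1)
  let x : ℕ → ℕ → ℕ := fun n i => pt n (T n i) i
  have x_eq : ∀ n t i, i < len n t → x n i = pt n t i := by
    intro n t i hi
    have h1 : pt n (max t (T n i)) i = pt n t i := pt_frozen n i t _ (le_max_left _ _) hi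
    have h2 : pt n (max t (T n i)) i = pt n (T n i) i :=
      pt_frozen n i (T n i) _ (le_max_right _ _) (hT n i)
    show pt n (T n i) i = pt n t i
    rw [← h2, h1]
  have cyl_eq : ∀ n t, cylinder (x n) (len n t) = cylinder (pt n t) (len n t) := by
    intro n t
    have hx : ∀ i, i < len n t → x n i = pt n t i := fun i hi => x_eq n t i hi
    ext y
    simp only [PiNat.mem_cylinder_iff]
    exact ⟨fun h i hi => (h i hi).trans (hx i hi), fun h i hi => (h i hi).trans (hx i hi).symm⟩
  have notsep : ∀ t, ¬ SepFam fun n => f n '' cylinder (x n) (len n t) := by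
    intro t
    have heq : (fun n => f n '' cylinder (x n) (len n t))
        = fun n => f n '' cylinder (pt n t) (len n t) := funext fun n => by rw [cyl_eq]
    rw [heq]
    exact (seq t).2
  have z_eq : ∀ a b, f a (x a) = f b (x b) := by
    intro a b
    by_contra hne
    have hab : a ≠ b := by rintro rfl; exact hne rfl
    obtain ⟨U, V, hU, hV, hfaU, hfbV, hUV⟩ := t2_separation hne
    letI : MetricSpace (ℕ → ℕ) := PiNat.metricSpaceNatNat
    obtain ⟨εa, hεa, hball_a⟩ : ∃ ε > 0, Metric.ball (x a) ε ⊆ f a ⁻¹' U :=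
      Metric.mem_nhds_iff.1 ((hf a).continuousAt.preimage_mem_nhds (hU.mem_nhds hfaU))
    obtain ⟨εb, hεb, hball_b⟩ : ∃ ε > 0, Metric.ball (x b) ε ⊆ f b ⁻¹' V :=
      Metric.mem_nhds_iff.1 ((hf b).continuousAt.preimage_mem_nhds (hV.mem_nhds hfbV))
    obtain ⟨La, hLa⟩ : ∃ L : ℕ, ((1 : ℝ) / 2) ^ L < εa :=
      exists_pow_lt_of_lt_one hεa (by norm_num)
    obtain ⟨Lb, hLb⟩ : ∃ L : ℕ, ((1 : ℝ) / 2) ^ L < εb :=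
      exists_pow_lt_of_lt_one hεb (by norm_num)
    obtain ⟨ta, hta⟩ := len_unbdd a La
    obtain ⟨tb, htb⟩ := len_unbdd b Lb
    set t := max ta tb with ht
    have hla : La ≤ len a t := hta.trans (len_mono a (le_max_left _ _))
    have hlb : Lb ≤ len b t := htb.trans (len_mono b (le_max_right _ _))
    apply notsep t
    refine ⟨fun n => if n = a then U else if n = b then V else univ, ?_, ?_, ?_⟩
    · intro n
      dsimp only
      split_ifs
      exacts [hU.measurableSet, hV.measurableSet, .univ]
    · intro n
      dsimp only
      split_ifs with h1 h2
      · subst h1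
        rintro w ⟨y, hy, rfl⟩
        apply hball_a
        have hd : dist y (x n) ≤ ((1 : ℝ) / 2) ^ len n t := mem_cylinder_iff_dist_le.1 hy
        have h2 : ((1 : ℝ) / 2) ^ len n t ≤ ((1 : ℝ) / 2) ^ La :=
          pow_le_pow_of_le_one (by norm_num) (by norm_num) hla
        exact Metric.mem_ball.2 (lt_of_le_of_lt (hd.trans h2) hLa)
      · subst h2
        rintro w ⟨y, hy, rfl⟩
        apply hball_b
        have hd : dist y (x n) ≤ ((1 : ℝ) / 2) ^ len n t := mem_cylinder_iff_dist_le.1 hy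
        have h2 : ((1 : ℝ) / 2) ^ len n t ≤ ((1 : ℝ) / 2) ^ Lb :=
          pow_le_pow_of_le_one (by norm_num) (by norm_num) hlb
        exact Metric.mem_ball.2 (lt_of_le_of_lt (hd.trans h2) hLb)
      · exact subset_univ _
    · ext w
      simp only [mem_iInter, mem_empty_iff_false, iff_false]
      intro hw
      have h1 := hw a
      rw [if_pos rfl] at h1
      have h2 := hw b
      rw [if_neg (Ne.symm hab), if_pos rfl] at h2
      exact (hUV.le_bot ⟨h1, h2⟩ : w ∈ (⊥ : Set α)).elim
  have hmem : f 0 (x 0) ∈ ⋂ n, range (f n) := by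
    refine mem_iInter.2 fun n => ?_
    rw [z_eq 0 n]
    exact mem_range_self _
  rw [hdisj] at hmem
  exact hmem

/-- Novikov's countable separation theorem: countably many analytic sets with empty
intersection can be enclosed in Borel sets with empty intersection. -/
theorem analytic_sepFam [TopologicalSpace α] [T2Space α] [MeasurableSpace α]
    [OpensMeasurableSpace α] (A : ℕ → Set α) (hA : ∀ n, AnalyticSet (A n))
    (hdisj : (⋂ n, A n) = ∅) :
    ∃ B : ℕ → Set α, (∀ n, MeasurableSet (B n)) ∧ (∀ n, A n ⊆ B n) ∧ (⋂ n, B n) = ∅ := by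
  by_cases h : ∃ m, A m = ∅
  · obtain ⟨m, hm⟩ := h
    refine ⟨fun n => if n = m then ∅ else univ, fun n => ?_, fun n => ?_, ?_⟩
    · dsimp only
      split_ifs
      exacts [.empty, .univ]
    · dsimp only
      split_ifs with h'
      · subst h'; rw [hm]
      · exact subset_univ _
    · apply eq_empty_iff_forall_notMem.2
      intro w hw
      have := mem_iInter.1 hw m
      rw [if_pos rfl] at this
      exact this
  · push_neg at h
    have hex : ∀ n, ∃ g : (ℕ → ℕ) → α, Continuous g ∧ range g = A n := by
      intro n
      have h' := hA n
      rw [AnalyticSet] at h'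
      rcases h' with h' | h'
      · exact absurd h' (h n).ne_empty
      · exact h'
    choose g hgc hgr using hex
    obtain ⟨B, h1, h2, h3⟩ := sepFam_ranges g hgc (by simp_rw [hgr]; exact hdisj)
    exact ⟨B, h1, fun n => (hgr n) ▸ h2 n, h3⟩

section LNandMain

variable {X : Type*} [TopologicalSpace X] [PolishSpace X] [MeasurableSpace X] [BorelSpace X]

variable {X : Type*} [TopologicalSpace X] [PolishSpace X] [MeasurableSpace X] [BorelSpace X]

lemma measurableSet_eq_fun' {β : Type*} [TopologicalSpace β] [PolishSpace β] [MeasurableSpace β]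
    [BorelSpace β] {γ : Type*} [MeasurableSpace γ] {f g : γ → β} (hf : Measurable f)
    (hg : Measurable g) : MeasurableSet {x | f x = g x} := by
  have heq : {x | f x = g x} = (fun x => (f x, g x)) ⁻¹' {p : β × β | p.1 = p.2} := rfl
  rw [heq]
  exact (isClosed_eq continuous_fst continuous_snd).measurableSet.preimage (hf.prodMk hg)

lemma analyticSet_inter' {β : Type*} [TopologicalSpace β] [T2Space β] {s t : Set β}
    (hs : AnalyticSet s) (ht : AnalyticSet t) : AnalyticSet (s ∩ t) := by
  have heq : s ∩ t = ⋂ b : Bool, bif b then s else t := by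
    ext z
    simp [Bool.forall_bool, and_comm]
  rw [heq]
  exact AnalyticSet.iInter fun b => by cases b <;> simpa

/-- The "bad pair" operator: pairs `(x, y)` such that some `(x, y') ∈ Z` with `y' ≠ y`. -/
lemma analyticSet_badPairs {Z : Set (X × X)} (hZ : AnalyticSet Z) :
    AnalyticSet {q : X × X | ∃ y', (q.1, y') ∈ Z ∧ y' ≠ q.2} := by
  have h1 : AnalyticSet {r : (X × X) × X | r.1 ∈ Z ∧ r.2 ≠ r.1.2} := by
    apply analyticSet_inter'
    · exact hZ.preimage continuous_fst
    · apply MeasurableSet.analyticSet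
      exact (measurableSet_eq_fun' measurable_snd
        (measurable_snd.comp measurable_fst)).compl
  have heq : {q : X × X | ∃ y', (q.1, y') ∈ Z ∧ y' ≠ q.2}
      = (fun r : (X × X) × X => (r.1.1, r.2)) '' {r | r.1 ∈ Z ∧ r.2 ≠ r.1.2} := by
    ext ⟨u, v⟩
    constructor
    · rintro ⟨y', hy1, hy2⟩
      exact ⟨((u, y'), v), ⟨hy1, fun h => hy2 h.symm⟩, rfl⟩
    · rintro ⟨⟨⟨a, b⟩, cc⟩, ⟨hm1, hm2⟩, heq⟩
      have h1 : a = u := congrArg Prod.fst heq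
      have h2 : cc = v := congrArg Prod.snd heq
      subst h1; subst h2
      exact ⟨b, hm1, fun h => hm2 h.symm⟩
  rw [heq]
  exact h1.image_of_continuous (by fun_prop)

/-- Reflection: an analytic partial-function graph extends to a Borel partial-function graph. -/
lemma reflect_graph {S : Set (X × X)} (hS : AnalyticSet S)
    (h1 : ∀ x y y', (x, y) ∈ S → (x, y') ∈ S → y = y') :
    ∃ D : Set (X × X), MeasurableSet D ∧ S ⊆ D ∧
      ∀ x y y', (x, y) ∈ D → (x, y') ∈ D → y = y' := by
  have hNS := analyticSet_badPairs hS
  have hd1 : Disjoint S {q : X × X | ∃ y', (q.1, y') ∈ S ∧ y' ≠ q.2} := by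
    rw [Set.disjoint_left]
    rintro ⟨u, v⟩ hqS ⟨y', hy'S, hne⟩
    exact hne (h1 u y' v hy'S hqS)
  obtain ⟨B0, hSB0, hdisj0, hB0meas⟩ := hS.measurablySeparable hNS hd1
  have hW := analyticSet_badPairs hB0meas.analyticSet
  have hd2 : Disjoint {q : X × X | ∃ y', (q.1, y') ∈ B0 ∧ y' ≠ q.2} S := by
    rw [Set.disjoint_left]
    rintro ⟨u, v⟩ ⟨y', hy'B, hne⟩ hqS
    have hmem : (u, y') ∈ {q : X × X | ∃ w, (q.1, w) ∈ S ∧ w ≠ q.2} :=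
      ⟨v, hqS, fun h => hne h.symm⟩
    exact Set.disjoint_left.1 hdisj0.symm hy'B hmem
  obtain ⟨C, hWC, hdisjC, hCmeas⟩ := hW.measurablySeparable hS hd2
  refine ⟨B0 \ C, hB0meas.diff hCmeas,
    fun q hq => ⟨hSB0 hq, fun hC => Set.disjoint_left.1 hdisjC.symm hC hq⟩, ?_⟩
  rintro x y y' ⟨hyB, hyC⟩ ⟨hy'B, hy'C⟩
  by_contra hne
  exact hyC (hWC ⟨y', hy'B, fun h => hne h.symm⟩)

/-- Decomposition of a Borel set with uniformly bounded finite sections into countably many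
Borel partial-function graphs. -/
lemma bounded_decomp : ∀ (N : ℕ) (R : Set (X × X)), MeasurableSet R →
    (∀ x, ∃ s : Finset X, s.card ≤ N ∧ ∀ y, (x, y) ∈ R → y ∈ s) →
    ∃ D : ℕ → Set (X × X), (∀ i, MeasurableSet (D i)) ∧
      (∀ i, D i ⊆ R) ∧ (∀ i x y y', (x, y) ∈ D i → (x, y') ∈ D i → y = y') ∧
      R ⊆ ⋃ i, D i := by
  intro N
  induction N with
  | zero =>
    intro R _ hb
    refine ⟨fun _ => ∅, by simp, by simp, by simp, ?_⟩
    rintro ⟨x, y⟩ hxy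
    obtain ⟨s, hs0, hscov⟩ := hb x
    have hys := hscov y hxy
    rw [Nat.le_zero, Finset.card_eq_zero] at hs0
    rw [hs0] at hys
    exact absurd hys (Finset.notMem_empty y)
  | succ N ih =>
    intro R hR hb
    obtain ⟨φ, hφ⟩ := exists_measurableEmbedding_real (α := X)
    classical
    set T : Set (X × X) := {q | q ∈ R ∧ ∃ v : Fin N → X, Function.Injective v ∧
        (∀ i, (q.1, v i) ∈ R) ∧ ∀ i, φ (v i) < φ q.2} with hT
    have hTR : T ⊆ R := fun q hq => hq.1
    have hTanal : AnalyticSet T := by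
      have heq : T = (fun r : (X × X) × (Fin N → X) => r.1) ''
          {r : (X × X) × (Fin N → X) | r.1 ∈ R ∧ Function.Injective r.2 ∧
            (∀ i, (r.1.1, r.2 i) ∈ R) ∧ ∀ i, φ (r.2 i) < φ r.1.2} := by
        ext q
        constructor
        · rintro ⟨hq, v, hv1, hv2, hv3⟩
          exact ⟨(q, v), ⟨hq, hv1, hv2, hv3⟩, rfl⟩
        · rintro ⟨⟨q', v⟩, ⟨h0, h1', h2, h3⟩, rfl⟩
          exact ⟨h0, v, h1', h2, h3⟩
      rw [heq]
      apply MeasurableSet.analyticSet_image _ measurable_fst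
      have hinj : MeasurableSet {r : (X × X) × (Fin N → X) | Function.Injective r.2} := by
        have heq2 : {r : (X × X) × (Fin N → X) | Function.Injective r.2} =
            ⋂ i, ⋂ j, {r : (X × X) × (Fin N → X) | r.2 i = r.2 j → i = j} := by
          ext r
          simp only [mem_iInter, mem_setOf_eq]
          exact ⟨fun h i j he => h he, fun h a b hab => h a b hab⟩
        rw [heq2]
        refine MeasurableSet.iInter fun i => MeasurableSet.iInter fun j => ?_
        by_cases hij : i = j
        · subst hij
          convert MeasurableSet.univ
          ext r
          simp
        · have heq3 : {r : (X × X) × (Fin N → X) | r.2 i = r.2 j → i = j}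
              = {r : (X × X) × (Fin N → X) | r.2 i = r.2 j}ᶜ := by
            ext r
            simp [hij]
          rw [heq3]
          exact (measurableSet_eq_fun' ((measurable_pi_apply i).comp measurable_snd)
            ((measurable_pi_apply j).comp measurable_snd)).compl
      simp only [setOf_and, setOf_forall]
      refine (hR.preimage measurable_fst).inter (hinj.inter (MeasurableSet.inter ?_ ?_))
      · refine MeasurableSet.iInter fun i => ?_
        exact hR.preimage ((measurable_fst.fst).prodMk
          ((measurable_pi_apply i).comp measurable_snd))
      · refine MeasurableSet.iInter fun i => ?_
        exact measurableSet_lt (hφ.measurable.comp ((measurable_pi_apply i).comp measurable_snd))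
          (hφ.measurable.comp (measurable_fst.snd))
    have hTuniq : ∀ x y y', (x, y) ∈ T → (x, y') ∈ T → y = y' := by
      have key : ∀ x z z', (x, z) ∈ T → (x, z') ∈ T → φ z < φ z' → False := by
        intro x z z' hz hz' hlt
        obtain ⟨hzR, v, hvinj, hvR, hvlt⟩ := hz
        obtain ⟨s, hcard, hcov⟩ := hb x
        set F : Finset X := (Finset.univ.image v) ∪ {z, z'} with hF
        have hsub : F ⊆ s := by
          intro a ha
          rw [hF, Finset.mem_union] at ha
          rcases ha with ha | ha
          · obtain ⟨i, _, rfl⟩ := Finset.mem_image.1 ha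
            exact hcov _ (hvR i)
          · rcases Finset.mem_insert.1 ha with rfl | ha
            · exact hcov _ hzR
            · rw [Finset.mem_singleton] at ha
              subst ha
              exact hcov _ hz'.1
        have hvz : ∀ i, v i ≠ z := fun i h => absurd (hvlt i) (by rw [h]; exact lt_irrefl _)
        have hvz' : ∀ i, v i ≠ z' := fun i h =>
          absurd ((hvlt i).trans hlt) (by rw [h]; exact lt_irrefl _)
        have hzz' : z ≠ z' := fun h => absurd hlt (by rw [h]; exact lt_irrefl _)
        have hcardF : F.card = N + 2 := by
          rw [hF, Finset.card_union_of_disjoint, Finset.card_image_of_injective _ hvinj]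
          · rw [Finset.card_univ, Fintype.card_fin, Finset.card_insert_of_notMem
              (by simp [hzz']), Finset.card_singleton]
          · rw [Finset.disjoint_left]
            intro a ha ha2
            obtain ⟨i, _, rfl⟩ := Finset.mem_image.1 ha
            rcases Finset.mem_insert.1 ha2 with h | h
            · exact hvz i h
            · exact hvz' i (Finset.mem_singleton.1 h)
        have := Finset.card_le_card hsub
        omega
      intro x y y' hy hy'
      by_contra hne
      have hφne : φ y ≠ φ y' := fun h => hne (hφ.injective h)
      rcases lt_or_gt_of_ne hφne with h | h
      · exact key x y y' hy hy' h
      · exact key x y' y hy' hy h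
    obtain ⟨D', hD'meas, hTD', hD'uniq⟩ := reflect_graph hTanal hTuniq
    set D0 : Set (X × X) := D' ∩ R with hD0
    have hD0meas : MeasurableSet D0 := hD'meas.inter hR
    have hTD0 : T ⊆ D0 := fun q hq => ⟨hTD' hq, hTR hq⟩
    have hD0uniq : ∀ x y y', (x, y) ∈ D0 → (x, y') ∈ D0 → y = y' :=
      fun x y y' h h' => hD'uniq x y y' h.1 h'.1
    set R' : Set (X × X) := R \ D0 with hR'
    have hR'meas : MeasurableSet R' := hR.diff hD0meas
    have hbound' : ∀ x, ∃ s : Finset X, s.card ≤ N ∧ ∀ y, (x, y) ∈ R' → y ∈ s := by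
      intro x
      obtain ⟨s, hcard, hcov⟩ := hb x
      have hsecfin : {y | (x, y) ∈ R}.Finite :=
        Set.Finite.subset s.finite_toSet fun y hy => hcov y hy
      set F : Finset X := hsecfin.toFinset with hFdef
      have hFmem : ∀ y, y ∈ F ↔ (x, y) ∈ R := by
        intro y
        rw [hFdef, Set.Finite.mem_toFinset]
        rfl
      by_cases hc : F.card ≤ N
      · exact ⟨F, hc, fun y hy => (hFmem y).2 hy.1⟩
      · have hFne : F.Nonempty := by
          rw [← Finset.card_pos]
          omega
        obtain ⟨ym, hymF, hymax⟩ := F.exists_max_image φ hFne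
        have hymR : (x, ym) ∈ R := (hFmem ym).1 hymF
        have hFcard : F.card = N + 1 := by
          have h1 : F.card ≤ s.card := Finset.card_le_card fun a ha => hcov a ((hFmem a).1 ha)
          omega
        set F' : Finset X := F.erase ym with hF'def
        have hF'card : F'.card = N := by
          rw [hF'def, Finset.card_erase_of_mem hymF, hFcard]
          omega
        have hcardt : Fintype.card ↥F' = N := by
          rw [Fintype.card_coe]
          exact hF'card
        set v : Fin N → X := fun i => ((Fintype.equivFinOfCardEq hcardt).symm i : X) with hv
        have hvinj : Function.Injective v := by
          intro i j h
          have := Subtype.coe_injective h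
          exact (Fintype.equivFinOfCardEq hcardt).symm.injective this
        have hvmem : ∀ i, v i ∈ F' := fun i => ((Fintype.equivFinOfCardEq hcardt).symm i).2
        have hymT : (x, ym) ∈ T := by
          refine ⟨hymR, v, hvinj, fun i => ?_, fun i => ?_⟩
          · exact (hFmem _).1 (Finset.mem_of_mem_erase (hvmem i))
          · have hle := hymax (v i) (Finset.mem_of_mem_erase (hvmem i))
            have hne : v i ≠ ym := Finset.ne_of_mem_erase (hvmem i)
            exact lt_of_le_of_ne hle fun h => hne (hφ.injective h)
        have hymD : (x, ym) ∈ D0 := hTD0 hymT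
        refine ⟨F', le_of_eq hF'card, fun y hy => ?_⟩
        have hyR : (x, y) ∈ R := hy.1
        have hyne : y ≠ ym := fun h => hy.2 (h ▸ hymD)
        exact Finset.mem_erase.2 ⟨hyne, (hFmem y).2 hyR⟩
    obtain ⟨Ds, hDsm, hDssub, hDsuniq, hDscov⟩ := ih R' hR'meas hbound'
    refine ⟨fun i => Nat.casesOn i D0 Ds, fun i => ?_, fun i => ?_, fun i => ?_, ?_⟩
    · cases i with
      | zero => exact hD0meas
      | succ i => exact hDsm i
    · cases i with
      | zero => exact fun q hq => hq.2
      | succ i => exact fun q hq => (hDssub i hq).1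
    · cases i with
      | zero => exact hD0uniq
      | succ i => exact hDsuniq i
    · intro q hq
      by_cases hqD : q ∈ D0
      · exact mem_iUnion.2 ⟨0, hqD⟩
      · obtain ⟨i, hi⟩ := mem_iUnion.1 (hDscov ⟨hq, hqD⟩)
        exact mem_iUnion.2 ⟨i + 1, hi⟩

/-- From a Borel partial-function graph to a total measurable function extending it. -/
lemma extend_graph {S : Set (X × X)} (hS : MeasurableSet S)
    (huniq : ∀ x y y', (x, y) ∈ S → (x, y') ∈ S → y = y') :
    ∃ e : X → X, Measurable e ∧ (∀ x, e x = x ∨ (x, e x) ∈ S) ∧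
      ∀ x y, (x, y) ∈ S → e x = y := by
  classical
  haveI : StandardBorelSpace S := hS.standardBorel
  set p : S → X := fun q => (q : X × X).1 with hp
  have hpmeas : Measurable p := measurable_fst.comp measurable_subtype_coe
  have hpinj : Function.Injective p := by
    rintro ⟨⟨a, b⟩, hab⟩ ⟨⟨c, d⟩, hcd⟩ h
    have h' : a = c := h
    subst h'
    exact Subtype.ext (Prod.ext rfl (huniq a b d hab hcd))
  have hemb : MeasurableEmbedding p := hpmeas.measurableEmbedding hpinj
  set e : X → X := Function.extend p (fun q => (q : X × X).2) id with he
  refine ⟨e, hemb.measurable_extend (measurable_snd.comp measurable_subtype_coe)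
    measurable_id, ?_, ?_⟩
  · intro x
    rw [he, Function.extend_def]
    split
    next h =>
      right
      have hq : p (Classical.choose h) = x := Classical.choose_spec h
      have hmem : ((Classical.choose h : S) : X × X) ∈ S := (Classical.choose h).2
      have hfst : ((Classical.choose h : S) : X × X).1 = x := hq
      have heq2 : (x, ((Classical.choose h : S) : X × X).2) = ((Classical.choose h : S) : X × X) :=
        Prod.ext hfst.symm rfl
      rw [heq2]
      exact hmem
    next h =>
      left; rfl
  · intro x y hxy
    rw [he]
    have hpx : p ⟨(x, y), hxy⟩ = x := rfl
    rw [← hpx, hpinj.extend_apply]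


/-- Countably many measurable "step functions" enumerating the sections of a locally finite
Borel relation. -/
lemma cover_graph_functions (R : Set (X × X)) (hR : MeasurableSet R)
    (hfin : ∀ x, {y | (x, y) ∈ R}.Finite) :
    ∃ e : ℕ → X → X, (∀ j, Measurable (e j)) ∧ (∀ j x, e j x = x ∨ (x, e j x) ∈ R) ∧
      ∀ x y, (x, y) ∈ R → ∃ j, e j x = y := by
  classical
  -- analytic "degree at least N+1" sets
  set Dset : ℕ → Set X := fun N =>
    {x : X | ∃ v : Fin (N + 1) → X, Function.Injective v ∧ ∀ i, (x, v i) ∈ R} with hDset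
  have hDanal : ∀ N, AnalyticSet (Dset N) := by
    intro N
    have heq : Dset N = (fun r : X × (Fin (N + 1) → X) => r.1) ''
        {r : X × (Fin (N + 1) → X) | Function.Injective r.2 ∧ ∀ i, (r.1, r.2 i) ∈ R} := by
      ext xx
      constructor
      · rintro ⟨v, hv1, hv2⟩
        exact ⟨(xx, v), ⟨hv1, hv2⟩, rfl⟩
      · rintro ⟨⟨x', v⟩, ⟨hv1, hv2⟩, rfl⟩
        exact ⟨v, hv1, hv2⟩
    rw [heq]
    apply MeasurableSet.analyticSet_image _ measurable_fst
    simp only [setOf_and, setOf_forall]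
    refine MeasurableSet.inter ?_ ?_
    · have heq2 : {r : X × (Fin (N + 1) → X) | Function.Injective r.2} =
          ⋂ i, ⋂ j, {r : X × (Fin (N + 1) → X) | r.2 i = r.2 j → i = j} := by
        ext r
        simp only [mem_iInter, mem_setOf_eq]
        exact ⟨fun h i j he => h he, fun h a b hab => h a b hab⟩
      rw [heq2]
      refine MeasurableSet.iInter fun i => MeasurableSet.iInter fun j => ?_
      by_cases hij : i = j
      · subst hij
        convert MeasurableSet.univ
        ext r
        simp
      · have heq3 : {r : X × (Fin (N + 1) → X) | r.2 i = r.2 j → i = j}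
            = {r : X × (Fin (N + 1) → X) | r.2 i = r.2 j}ᶜ := by
          ext r
          simp [hij]
        rw [heq3]
        exact (measurableSet_eq_fun' ((measurable_pi_apply i).comp measurable_snd)
          ((measurable_pi_apply j).comp measurable_snd)).compl
    · refine MeasurableSet.iInter fun i => ?_
      exact hR.preimage (measurable_fst.prodMk ((measurable_pi_apply i).comp measurable_snd))
  have hIempty : (⋂ N, Dset N) = ∅ := by
    apply eq_empty_iff_forall_notMem.2
    intro x hx
    set F : Finset X := (hfin x).toFinset with hF
    obtain ⟨v, hvinj, hvR⟩ := mem_iInter.1 hx F.card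
    have hvF : ∀ i, v i ∈ F := fun i => (Set.Finite.mem_toFinset _).2 (hvR i)
    have hcardle : (Finset.univ : Finset (Fin (F.card + 1))).card ≤ F.card :=
      Finset.card_le_card_of_injOn v (fun i _ => hvF i) hvinj.injOn
    rw [Finset.card_univ, Fintype.card_fin] at hcardle
    omega
  obtain ⟨B, hBmeas, hBsub, hBempty⟩ := analytic_sepFam Dset hDanal hIempty
  -- bounded-degree slices
  have hslice : ∀ N : ℕ, ∃ D : ℕ → Set (X × X), (∀ i, MeasurableSet (D i)) ∧
      (∀ i, D i ⊆ R ∩ ((B N)ᶜ ×ˢ univ)) ∧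
      (∀ i x y y', (x, y) ∈ D i → (x, y') ∈ D i → y = y') ∧
      R ∩ ((B N)ᶜ ×ˢ univ) ⊆ ⋃ i, D i := by
    intro N
    apply bounded_decomp N (R ∩ ((B N)ᶜ ×ˢ univ))
      (hR.inter (((hBmeas N).compl).prod MeasurableSet.univ))
    intro x
    by_cases hx : x ∈ B N
    · refine ⟨∅, by simp, fun y hy => absurd hy.2.1 ?_⟩
      simpa using hx
    · set F : Finset X := (hfin x).toFinset with hF
      refine ⟨F, ?_, fun y hy => (Set.Finite.mem_toFinset _).2 hy.1⟩
      by_contra hcard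
      push_neg at hcard
      obtain ⟨s', hs'sub, hs'card⟩ := Finset.exists_subset_card_eq (s := F) (n := N + 1) (by omega)
      have hcardt : Fintype.card ↥s' = N + 1 := by
        rw [Fintype.card_coe]
        exact hs'card
      set v : Fin (N + 1) → X := fun i => ((Fintype.equivFinOfCardEq hcardt).symm i : X) with hv
      have hvinj : Function.Injective v := by
        intro i j h
        exact (Fintype.equivFinOfCardEq hcardt).symm.injective (Subtype.coe_injective h)
      have hvR : ∀ i, (x, v i) ∈ R := by
        intro i
        have hmemF := hs'sub ((Fintype.equivFinOfCardEq hcardt).symm i).2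
        exact (Set.Finite.mem_toFinset (hfin x)).1 hmemF
      exact hx (hBsub N ⟨v, hvinj, hvR⟩)
  choose D hDm hDsub hDuniq hDcov using hslice
  have hfuncs : ∀ N i : ℕ, ∃ e : X → X, Measurable e ∧ (∀ x, e x = x ∨ (x, e x) ∈ R) ∧
      ∀ x y, (x, y) ∈ D N i → e x = y := by
    intro N i
    obtain ⟨e, he1, he2, he3⟩ := extend_graph (hDm N i) (hDuniq N i)
    exact ⟨e, he1, fun x => (he2 x).imp id fun h => (hDsub N i h).1, he3⟩
  choose e he1 he2 he3 using hfuncs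
  refine ⟨fun j => e (Nat.unpair j).1 (Nat.unpair j).2, fun j => he1 _ _,
    fun j x => he2 _ _ x, ?_⟩
  intro x y hxy
  have hex : ∃ N, x ∉ B N := by
    by_contra h
    push_neg at h
    have : x ∈ ⋂ N, B N := mem_iInter.2 h
    rw [hBempty] at this
    exact this
  obtain ⟨N, hN⟩ := hex
  have hmem : (x, y) ∈ R ∩ ((B N)ᶜ ×ˢ univ) := ⟨hxy, by simpa using hN, trivial⟩
  obtain ⟨i, hi⟩ := mem_iUnion.1 (hDcov N hmem)
  refine ⟨Nat.pair N i, ?_⟩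
  simp only [Nat.unpair_pair]
  exact he3 N i x y hi

/-- Localization: a measurable countably-valued function is constant on a comeager subset of
some nonempty open subset of any nonempty open set. -/
lemma loc_const {h : X → ℕ} (hm : ∀ i, MeasurableSet (h ⁻¹' {i})) {V : Set X} (hV : IsOpen V)
    (hne : V.Nonempty) :
    ∃ i O, IsOpen O ∧ O.Nonempty ∧ O ⊆ V ∧ IsMeagre (O \ h ⁻¹' {i}) := by
  haveI : BaireSpace X := by
    letI := TopologicalSpace.upgradeIsCompletelyMetrizable X
    infer_instance
  have hnm : ¬ IsMeagre V := by
    intro hmg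
    have hd : Dense Vᶜ := dense_of_mem_residual hmg
    obtain ⟨y, hy1, hy2⟩ := hd.exists_mem_open hV hne
    exact hy1 hy2
  have hcover : V = ⋃ i, (h ⁻¹' {i} ∩ V) := by
    ext x
    simp only [mem_iUnion, mem_inter_iff, mem_preimage, mem_singleton_iff]
    exact ⟨fun hx => ⟨h x, rfl, hx⟩, fun ⟨i, _, hx⟩ => hx⟩
  have hnotall : ¬ ∀ i, IsMeagre (h ⁻¹' {i} ∩ V) := by
    intro hall
    exact hnm (by rw [hcover]; exact isMeagre_iUnion hall)
  push_neg at hnotall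
  obtain ⟨i, hi⟩ := hnotall
  obtain ⟨U, hUopen, hUeq⟩ := ((hm i).inter hV.measurableSet).residualEq_isOpen
  set Dd : Set X := {x | (x ∈ h ⁻¹' {i} ∩ V) = (x ∈ U)} with hDd
  have hDres : Dd ∈ residual X := hUeq
  have hsub1 : (h ⁻¹' {i} ∩ V) \ U ⊆ Ddᶜ := by
    rintro x ⟨hx1, hx2⟩ hx3
    have hx3' : (x ∈ h ⁻¹' {i} ∩ V) = (x ∈ U) := hx3
    exact hx2 (hx3' ▸ hx1)
  have hmDc : IsMeagre Ddᶜ := by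
    rw [IsMeagre, compl_compl]
    exact hDres
  have hOne : (U ∩ V).Nonempty := by
    rw [nonempty_iff_ne_empty]
    intro hUV
    apply hi
    have : h ⁻¹' {i} ∩ V ⊆ Ddᶜ := by
      intro x hx
      apply hsub1
      refine ⟨hx, fun hxU => ?_⟩
      have : x ∈ U ∩ V := ⟨hxU, hx.2⟩
      rw [hUV] at this
      exact this
    exact hmDc.mono this
  refine ⟨i, U ∩ V, hUopen.inter hV, hOne, inter_subset_right, ?_⟩
  apply hmDc.mono
  rintro x ⟨⟨hxU, hxV⟩, hxh⟩ hxD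
  have : (x ∈ h ⁻¹' {i} ∩ V) = (x ∈ U) := hxD
  exact hxh (this ▸ hxU : x ∈ h ⁻¹' {i} ∩ V).1


theorem comeager_sparse_decomposition_aux (G : SimpleGraph X)
    (hGBorel : MeasurableSet {p : X × X | G.Adj p.1 p.2})
    (hlocfin : ∀ x : X, (G.neighborSet x).Finite)
    (f : ℕ → ℕ) :
    ∃ A : ℕ → Set X,
      (∀ n, MeasurableSet (A n)) ∧
      (⋃ n, A n) ∈ residual X ∧
      (∀ x y : X, G.Adj x y → (x ∈ ⋃ n, A n ↔ y ∈ ⋃ n, A n)) ∧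
      (∀ n, ∀ x ∈ A n, ∀ y ∈ A n, x ≠ y → ∀ p : G.Walk x y, f n < p.length) := by
  classical
  rcases isEmpty_or_nonempty X with hX | hX
  · refine ⟨fun _ => ∅, fun _ => MeasurableSet.empty, ?_, ?_, ?_⟩
    · have huniv : (⋃ _ : ℕ, (∅ : Set X)) = univ := by
        rw [iUnion_empty]
        exact (Set.univ_eq_empty_iff.2 hX).symm
      rw [huniv]
      exact Filter.univ_mem
    · intro x
      exact (IsEmpty.false x).elim
    · intro n x hx
      exact absurd hx (notMem_empty x)
  -- step functions enumerating neighbors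
  obtain ⟨e, hemeas, hestep, hecov⟩ := cover_graph_functions {p : X × X | G.Adj p.1 p.2} hGBorel
    (fun x => hlocfin x)
  -- words
  set Fw : List ℕ → X → X := fun l x => l.foldr (fun j y => e j y) x with hFw
  have Fw_nil : ∀ x, Fw [] x = x := fun _ => rfl
  have Fw_cons : ∀ j l x, Fw (j :: l) x = e j (Fw l x) := fun _ _ _ => rfl
  have Fw_append : ∀ l j x, Fw (l ++ [j]) x = Fw l (e j x) := by
    intro l j x
    show List.foldr (fun j y => e j y) x (l ++ [j]) = List.foldr (fun j y => e j y) (e j x) l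
    rw [List.foldr_append]
    rfl
  have Fw_meas : ∀ l, Measurable (Fw l) := by
    intro l
    induction l with
    | nil => exact measurable_id
    | cons j l ih => exact (hemeas j).comp ih
  -- from walks to words
  have walk_to_word : ∀ (x y : X) (p : G.Walk x y), ∃ l : List ℕ, l.length ≤ p.length ∧
      Fw l x = y := by
    intro x y p
    induction p with
    | nil => exact ⟨[], by simp, rfl⟩
    | @cons u v w h q ih =>
      obtain ⟨l, hl, hly⟩ := ih
      obtain ⟨j, hj⟩ := hecov u v h
      refine ⟨l ++ [j], ?_, ?_⟩
      · rw [List.length_append, SimpleGraph.Walk.length_cons]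
        simpa using hl
      · rw [Fw_append, hj, hly]
  -- finite balls
  have ball_fin : ∀ (r : ℕ) (x : X), {y | ∃ l : List ℕ, l.length ≤ r ∧ Fw l x = y}.Finite := by
    intro r
    induction r with
    | zero =>
      intro x
      apply Set.Finite.subset (finite_singleton x)
      rintro y ⟨l, hl, rfl⟩
      rw [Nat.le_zero, List.length_eq_zero_iff] at hl
      subst hl
      exact rfl
    | succ r ih =>
      intro x
      apply Set.Finite.subset (Set.Finite.biUnion (ih x)
        (fun z _ => (finite_singleton z).union (hlocfin z)))
      rintro y ⟨l, hl, rfl⟩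
      cases l with
      | nil =>
        have hz : x ∈ {y | ∃ l : List ℕ, l.length ≤ r ∧ Fw l x = y} := ⟨[], by simp, rfl⟩
        exact mem_biUnion hz (mem_union_left _ rfl)
      | cons j l' =>
        rw [List.length_cons] at hl
        have hz : Fw l' x ∈ {y | ∃ l : List ℕ, l.length ≤ r ∧ Fw l x = y} := ⟨l', by omega, rfl⟩
        refine mem_biUnion hz ?_
        rw [Fw_cons]
        rcases hestep j (Fw l' x) with h | h
        · exact mem_union_left _ (by rw [h]; rfl)
        · exact mem_union_right _ h
  -- basis
  obtain ⟨bas, hbasc, hbasne, hbasis⟩ := TopologicalSpace.exists_countable_basis X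
  have hbasnonempty : bas.Nonempty := by
    rcases Set.eq_empty_or_nonempty bas with h | h
    · exfalso
      have huniv := hbasis.sUnion_eq
      rw [h] at huniv
      simp only [sUnion_empty] at huniv
      obtain ⟨x⟩ := hX
      have : x ∈ (univ : Set X) := trivial
      rw [← huniv] at this
      exact this
    · exact h
  obtain ⟨Bas, hBasRange⟩ := Set.Countable.exists_eq_range hbasc hbasnonempty
  have hBasmem : ∀ j, Bas j ∈ bas := by
    intro j
    rw [hBasRange]
    exact mem_range_self j
  have hBasOpen : ∀ j, IsOpen (Bas j) := fun j => hbasis.isOpen (hBasmem j)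
  have hBasNe : ∀ j, (Bas j).Nonempty := by
    intro j
    rcases Set.eq_empty_or_nonempty (Bas j) with h | h
    · exact absurd (h ▸ hBasmem j) hbasne
    · exact h
  have hBasSep : ∀ (x : X) (U : Set X), IsOpen U → x ∈ U → ∃ j, x ∈ Bas j ∧ Bas j ⊆ U := by
    intro x U hU hx
    obtain ⟨u, hu, hxu, huU⟩ := hbasis.exists_subset_of_mem_open hx hU
    rw [hBasRange] at hu
    obtain ⟨j, rfl⟩ := hu
    exact ⟨j, hxu, huU⟩
  -- colorings
  have cex : ∀ (r : ℕ) (x : X), ∃ j, x ∈ Bas j ∧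
      ∀ l : List ℕ, l.length ≤ r → Fw l x ∈ Bas j → Fw l x = x := by
    intro r x
    have hfb : ({y | ∃ l : List ℕ, l.length ≤ r ∧ Fw l x = y} \ {x}).Finite :=
      (ball_fin r x).diff
    have hcl : IsClosed ({y | ∃ l : List ℕ, l.length ≤ r ∧ Fw l x = y} \ {x}) :=
      hfb.isClosed
    have hxU : x ∈ ({y | ∃ l : List ℕ, l.length ≤ r ∧ Fw l x = y} \ {x})ᶜ := by
      intro h
      exact h.2 rfl
    obtain ⟨j, hxj, hjsub⟩ := hBasSep x _ hcl.isOpen_compl hxU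
    refine ⟨j, hxj, fun l hl hmem => ?_⟩
    by_contra hne
    exact (hjsub hmem) ⟨⟨l, hl, rfl⟩, hne⟩
  set c : ℕ → X → ℕ := fun r x => Nat.find (cex r x) with hc
  have cspec : ∀ r x, x ∈ Bas (c r x) ∧
      ∀ l : List ℕ, l.length ≤ r → Fw l x ∈ Bas (c r x) → Fw l x = x :=
    fun r x => Nat.find_spec (cex r x)
  have color_prop : ∀ (r : ℕ) (x y : X), c r x = c r y →
      (∃ l : List ℕ, l.length ≤ r ∧ Fw l x = y) → y = x := by
    rintro r x y hcc ⟨l, hl, hly⟩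
    have h1 := (cspec r y).1
    rw [← hcc] at h1
    have := (cspec r x).2 l hl (by rw [hly]; exact h1)
    rw [← hly, this]
  have hcfib : ∀ r i, MeasurableSet {x | c r x = i} := by
    intro r i
    have heq : {x | c r x = i} =
        ({x | x ∈ Bas i ∧ ∀ l : List ℕ, l.length ≤ r → Fw l x ∈ Bas i → Fw l x = x} ∩
          ⋂ m : ℕ, {x | m < i →
            ¬ (x ∈ Bas m ∧ ∀ l : List ℕ, l.length ≤ r → Fw l x ∈ Bas m → Fw l x = x)}) := by
      ext x
      have hfind : c r x = i ↔ ((x ∈ Bas i ∧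
          ∀ l : List ℕ, l.length ≤ r → Fw l x ∈ Bas i → Fw l x = x) ∧
          ∀ m, m < i → ¬(x ∈ Bas m ∧
            ∀ l : List ℕ, l.length ≤ r → Fw l x ∈ Bas m → Fw l x = x)) :=
        Nat.find_eq_iff (cex r x)
      simp only [mem_setOf_eq, mem_inter_iff, mem_iInter]
      rw [hfind]
    rw [heq]
    have hgood : ∀ m : ℕ, MeasurableSet
        {x | x ∈ Bas m ∧ ∀ l : List ℕ, l.length ≤ r → Fw l x ∈ Bas m → Fw l x = x} := by
      intro m
      simp only [setOf_and, setOf_forall]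
      apply MeasurableSet.inter (hBasOpen m).measurableSet
      refine MeasurableSet.iInter fun l => ?_
      refine MeasurableSet.iInter fun _ => ?_
      have heq2 : {x | Fw l x ∈ Bas m → Fw l x = x}
          = (Fw l ⁻¹' (Bas m))ᶜ ∪ {x | Fw l x = x} := by
        ext x
        simp only [mem_setOf_eq, mem_union, mem_compl_iff, mem_preimage]
        tauto
      rw [heq2]
      refine MeasurableSet.union ((Fw_meas l (hBasOpen m).measurableSet).compl) ?_
      have heq3 : {x | Fw l x = x} = (fun x => (Fw l x, x)) ⁻¹' {p : X × X | p.1 = p.2} := rfl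
      rw [heq3]
      exact ((isClosed_eq continuous_fst continuous_snd).measurableSet).preimage
        ((Fw_meas l).prodMk measurable_id)
    apply MeasurableSet.inter (hgood i)
    refine MeasurableSet.iInter fun m => ?_
    by_cases hm : m < i
    · have heq4 : {x | m < i →
          ¬ (x ∈ Bas m ∧ ∀ l : List ℕ, l.length ≤ r → Fw l x ∈ Bas m → Fw l x = x)} =
          {x | x ∈ Bas m ∧ ∀ l : List ℕ, l.length ≤ r → Fw l x ∈ Bas m → Fw l x = x}ᶜ := by
        ext x
        simp [hm]
      rw [heq4]
      exact (hgood m).compl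
    · have heq4 : {x | m < i →
          ¬ (x ∈ Bas m ∧ ∀ l : List ℕ, l.length ≤ r → Fw l x ∈ Bas m → Fw l x = x)} = univ := by
        ext x
        simp [hm]
      rw [heq4]
      exact MeasurableSet.univ
  -- the matching choices
  have hloc : ∀ (l : List ℕ) (k : ℕ), ∃ i O, IsOpen O ∧ O.Nonempty ∧ O ⊆ Bas k ∧
      IsMeagre (O \ (fun x => c (f (Encodable.encode (l, k))) (Fw l x)) ⁻¹' {i}) := by
    intro l k
    apply loc_const (h := fun x => c (f (Encodable.encode (l, k))) (Fw l x))
      (fun i => ?_) (hBasOpen k) (hBasNe k)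
    · have heq : (fun x => c (f (Encodable.encode (l, k))) (Fw l x)) ⁻¹' {i}
          = Fw l ⁻¹' {x | c (f (Encodable.encode (l, k))) x = i} := rfl
      rw [heq]
      exact Fw_meas l (hcfib _ i)
  choose ival Oset hO1 hO2 hO3 hO4 using hloc
  set islot : ℕ → ℕ := fun n =>
    ((Encodable.decode₂ (List ℕ × ℕ) n).map fun p => ival p.1 p.2).getD 0 with hislot
  have hislot_enc : ∀ l k, islot (Encodable.encode (l, k)) = ival l k := by
    intro l k
    have hde : Encodable.decode₂ (List ℕ × ℕ) (Encodable.encode (l, k)) = some (l, k) :=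
      Encodable.mem_decode₂.2 rfl
    show ((Encodable.decode₂ (List ℕ × ℕ) (Encodable.encode (l, k))).map
      (fun p => ival p.1 p.2)).getD 0 = ival l k
    rw [hde]
    rfl
  set Vs : Set X := ⋃ n, {x | c (f n) x = islot n} with hVs
  set Vstar : Set X := ⋂ l : List ℕ, Fw l ⁻¹' Vs with hVstar
  have hVstarMeas : MeasurableSet Vstar := by
    refine MeasurableSet.iInter fun l => ?_
    apply Fw_meas l
    exact MeasurableSet.iUnion fun n => hcfib (f n) (islot n)
  -- invariance
  have hVadj : ∀ x y, G.Adj x y → x ∈ Vstar → y ∈ Vstar := by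
    intro x y hxy hx
    obtain ⟨j, hj⟩ := hecov x y hxy
    refine mem_iInter.2 fun l => ?_
    have hmem := mem_iInter.1 hx (l ++ [j])
    rw [mem_preimage] at hmem ⊢
    rw [Fw_append, hj] at hmem
    exact hmem
  -- the sets
  refine ⟨fun n => {x | c (f n) x = islot n} ∩ Vstar, fun n => (hcfib _ _).inter hVstarMeas,
    ?_, ?_, ?_⟩
  · -- residual
    have hunion : (⋃ n, {x | c (f n) x = islot n} ∩ Vstar) = Vstar := by
      apply subset_antisymm
      · exact iUnion_subset fun n => inter_subset_right
      · intro x hx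
        have hxV : x ∈ Vs := by
          have hmem := mem_iInter.1 hx ([] : List ℕ)
          rw [mem_preimage] at hmem
          exact hmem
        obtain ⟨n, hn⟩ := mem_iUnion.1 hxV
        exact mem_iUnion.2 ⟨n, hn, hx⟩
    rw [hunion]
    have hWdense : ∀ l : List ℕ, Dense (⋃ k, Oset l k) := by
      intro l
      rw [dense_iff_inter_open]
      rintro U hU ⟨x0, hx0⟩
      obtain ⟨k, _, hk2⟩ := hBasSep x0 U hU hx0
      obtain ⟨y, hy⟩ := hO2 l k
      exact ⟨y, hk2 (hO3 l k hy), mem_iUnion.2 ⟨k, hy⟩⟩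
    have hsub : (⋂ l : List ℕ, ((⋃ k, Oset l k) \
        ⋃ k, (Oset l k \ (fun x => c (f (Encodable.encode (l, k))) (Fw l x)) ⁻¹' {ival l k})))
        ⊆ Vstar := by
      intro x hx
      refine mem_iInter.2 fun l => ?_
      have hmem := mem_iInter.1 hx l
      obtain ⟨k, hk⟩ := mem_iUnion.1 hmem.1
      have hnot := hmem.2
      rw [mem_iUnion] at hnot
      push_neg at hnot
      have hval : x ∈ (fun x => c (f (Encodable.encode (l, k))) (Fw l x)) ⁻¹' {ival l k} := by
        by_contra hcon
        exact (hnot k) ⟨hk, hcon⟩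
      rw [mem_preimage, mem_singleton_iff] at hval
      rw [mem_preimage]
      refine mem_iUnion.2 ⟨Encodable.encode (l, k), ?_⟩
      rw [mem_setOf_eq, hval, hislot_enc]
    refine Filter.mem_of_superset ?_ hsub
    refine (countable_iInter_mem).2 fun l => ?_
    have h1 : (⋃ k, Oset l k) ∈ residual X :=
      residual_of_dense_open (isOpen_iUnion (hO1 l)) (hWdense l)
    have h2 : IsMeagre (⋃ k, (Oset l k \
        (fun x => c (f (Encodable.encode (l, k))) (Fw l x)) ⁻¹' {ival l k})) :=
      isMeagre_iUnion fun k => hO4 l k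
    rw [diff_eq]
    exact Filter.inter_mem h1 h2
  · -- invariance
    intro x y hxy
    have hsub : ∀ n, {x | c (f n) x = islot n} ∩ Vstar ⊆ Vstar := fun n => inter_subset_right
    have hVeq : (⋃ n, {x | c (f n) x = islot n} ∩ Vstar) = Vstar := by
      apply subset_antisymm (iUnion_subset hsub)
      intro z hz
      have hzV : z ∈ Vs := by
        have hmem := mem_iInter.1 hz ([] : List ℕ)
        rw [mem_preimage] at hmem
        exact hmem
      obtain ⟨n, hn⟩ := mem_iUnion.1 hzV
      exact mem_iUnion.2 ⟨n, hn, hz⟩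
    rw [hVeq]
    exact ⟨hVadj x y hxy, hVadj y x hxy.symm⟩
  · -- sparsity
    intro n x hx y hy hne p
    by_contra hlen
    push_neg at hlen
    obtain ⟨l, hl, hly⟩ := walk_to_word x y p
    have hcc : c (f n) x = c (f n) y := by
      rw [hx.1, hy.1]
    have := color_prop (f n) x y hcc ⟨l, hl.trans hlen, hly⟩
    exact hne this.symm

end LNandMain

end MarksUngerProof

/-- **Lemma (Marks–Unger).** If `G` is a locally finite Borel graph on a Polish space `X` and
`f : ℕ → ℕ`, then there are Borel sets `Aₙ ⊆ X` whose union `A = ⋃ₙ Aₙ` is comeager and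
`G`-invariant, such that any two distinct points of `Aₙ` have `G`-distance greater than `f n`
(i.e., every `G`-walk between them has length greater than `f n`). -/
theorem comeager_sparse_decomposition {X : Type*} [TopologicalSpace X] [PolishSpace X]
    [MeasurableSpace X] [BorelSpace X]
    (G : SimpleGraph X)
    (hGBorel : MeasurableSet {p : X × X | G.Adj p.1 p.2})
    (hlocfin : ∀ x : X, (G.neighborSet x).Finite)
    (f : ℕ → ℕ) :
    ∃ A : ℕ → Set X,
      (∀ n, MeasurableSet (A n)) ∧
      (⋃ n, A n) ∈ residual X ∧
      (∀ x y : X, G.Adj x y → (x ∈ ⋃ n, A n ↔ y ∈ ⋃ n, A n)) ∧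
      (∀ n, ∀ x ∈ A n, ∀ y ∈ A n, x ≠ y → ∀ p : G.Walk x y, f n < p.length) :=
  MarksUngerProof.comeager_sparse_decomposition_aux G hGBorel hlocfin f
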